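/- arXiv:2008.03702 — 2 statements merged into one kernel-verified Lean document; each statement's English description precedes it below -/
import Mathlib

section
/- Let m_𝓘 ∈ ℕ with m_𝓘 ≥ 1, let λ_i > 0 for i in a finite nonempty set 𝓞, and let (γ_i)_{i∈𝓞} satisfy 0 < γ_i < 1 and ∑_{i∈𝓞} γ_i = 1. Then there exist k_i > 0 (i ∈ 𝓞) such that for every i ∈ 𝓞: γ_i = (λ_i k_i)/(λ_i + m_𝓘 k_i) · ( ∑_{j∈𝓞} (λ_j k_j)/(λ_j + m_𝓘 k_j) )^{−1}. -/
open Finset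

theorem stmt_14 (mI : ℕ) (hmI : 1 ≤ mI) {ι : Type*} [Fintype ι] [Nonempty ι]
    (lam γ : ι → ℝ)
    (hlam : ∀ i, 0 < lam i)
    (hγ : ∀ i, 0 < γ i ∧ γ i < 1)
    (hsum : ∑ i, γ i = 1) :
    ∃ k : ι → ℝ, (∀ i, 0 < k i) ∧
      ∀ i, γ i = lam i * k i / (lam i + (mI : ℝ) * k i) *
        (∑ j, lam j * k j / (lam j + (mI : ℝ) * k j))⁻¹ := by
  have hmI' : (0:ℝ) < mI := by exact_mod_cast hmI
  set θ : ℝ := (Finset.univ.inf' univ_nonempty lam) / (2 * mI) with hθ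
  have hinf : ∀ i, Finset.univ.inf' univ_nonempty lam ≤ lam i := fun i =>
    Finset.inf'_le _ (mem_univ i)
  obtain ⟨i0⟩ := ‹Nonempty ι›
  have hinfpos : 0 < Finset.univ.inf' univ_nonempty lam := by
    obtain ⟨j, _, hj⟩ := Finset.exists_mem_eq_inf' (univ_nonempty (α := ι)) lam
    rw [hj]; exact hlam j
  have hθpos : 0 < θ := div_pos hinfpos (by positivity)
  have hkey : ∀ i, (mI : ℝ) * (θ * γ i) < lam i := by
    intro i
    have hγi := hγ i
    calc (mI : ℝ) * (θ * γ i) < (mI : ℝ) * (θ * 1) := by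
          apply mul_lt_mul_of_pos_left _ hmI'
          exact mul_lt_mul_of_pos_left hγi.2 hθpos
      _ = Finset.univ.inf' univ_nonempty lam / 2 := by
          rw [mul_one, hθ]; field_simp
      _ < Finset.univ.inf' univ_nonempty lam := by linarith
      _ ≤ lam i := hinf i
  set k : ι → ℝ := fun i => lam i * (θ * γ i) / (lam i - mI * (θ * γ i)) with hk
  have hkpos : ∀ i, 0 < k i := by
    intro i
    apply div_pos (mul_pos (hlam i) (mul_pos hθpos (hγ i).1))
    linarith [hkey i]
  have hfrac : ∀ i, lam i * k i / (lam i + (mI : ℝ) * k i) = θ * γ i := by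
    intro i
    have hd : lam i - mI * (θ * γ i) ≠ 0 := by linarith [hkey i]
    have hli : lam i ≠ 0 := (hlam i).ne'
    have hden : lam i + (mI : ℝ) * k i = lam i * lam i / (lam i - mI * (θ * γ i)) := by
      rw [hk]; simp only []; rw [mul_div_assoc', add_div' _ _ _ hd]; congr 1; ring
    rw [hden, hk]
    simp only []
    rw [mul_div_assoc', div_div_div_cancel_right₀ hd]; field_simp
  refine ⟨k, hkpos, fun i => ?_⟩
  have hsum' : (∑ j, lam j * k j / (lam j + (mI : ℝ) * k j)) = θ := by
    simp_rw [hfrac]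
    rw [← Finset.mul_sum, hsum, mul_one]
  rw [hfrac, hsum', mul_comm θ, mul_assoc, mul_inv_cancel₀ hθpos.ne', mul_one]
end

section
/- Let n ≥ 1, λ₁, λ₂ > 0, and γ_i ∈ (0,1) for i = 1,…,n. Consider the linear system k(−γ_i(λ₁+λ₂)+λ₁) ∑_{j=1}^n X_j + λ₁ λ₂ X_i = γ_i λ₁ λ₂, i = 1,…,n, in the unknowns X_i. Then for all sufficiently small k > 0 this system has a unique solution (X_i), and moreover 0 < X_i < 1 for every i. -/
open Finset

set_option maxHeartbeats 1000000 in
theorem stmt_16 (n : ℕ) (hn : 1 ≤ n) (lam₁ lam₂ : ℝ)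
    (hlam₁ : 0 < lam₁) (hlam₂ : 0 < lam₂)
    (γ : Fin n → ℝ) (hγ : ∀ i, 0 < γ i ∧ γ i < 1) :
    ∃ k₀ : ℝ, 0 < k₀ ∧ ∀ k : ℝ, 0 < k → k < k₀ →
      (∃! X : Fin n → ℝ, ∀ i,
        k * (-(γ i) * (lam₁ + lam₂) + lam₁) * (∑ j, X j) + lam₁ * lam₂ * X i
          = γ i * (lam₁ * lam₂)) ∧
      (∀ X : Fin n → ℝ,
        (∀ i, k * (-(γ i) * (lam₁ + lam₂) + lam₁) * (∑ j, X j) + lam₁ * lam₂ * X i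
          = γ i * (lam₁ * lam₂)) → ∀ i, 0 < X i ∧ X i < 1) := by
  have hnpos : (0:ℝ) < n := by exact_mod_cast hn
  have hnz : NeZero n := ⟨by omega⟩
  have hne : (univ : Finset (Fin n)).Nonempty := univ_nonempty
  set C : ℝ := lam₁ + lam₂ with hCdef
  set L : ℝ := lam₁ * lam₂ with hLdef
  have hCpos : 0 < C := by positivity
  have hLpos : 0 < L := by positivity
  have hL0 : L ≠ 0 := hLpos.ne'
  set c : Fin n → ℝ := fun i => -(γ i) * C + lam₁ with hcdef
  have hco : ∀ i, c i = -(γ i) * C + lam₁ := fun i => rfl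
  have hcbound : ∀ i, |c i| ≤ C := by
    intro i
    obtain ⟨h1, h2⟩ := hγ i
    rw [abs_le, hco i]
    constructor <;> nlinarith
  set ε : ℝ := min 1 (univ.inf' hne fun i => min (γ i) (1 - γ i)) with hεdef
  have hεle : ∀ i, ε ≤ min (γ i) (1 - γ i) := fun i =>
    (min_le_right _ _).trans (inf'_le _ (mem_univ i))
  have hεpos : 0 < ε := by
    refine lt_min one_pos ?_
    rw [Finset.lt_inf'_iff]
    intro i _
    obtain ⟨h1, h2⟩ := hγ i
    exact lt_min h1 (by linarith)
  have hε1 : ε ≤ 1 := min_le_left _ _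
  refine ⟨ε * L / (2 * n * C), by positivity, ?_⟩
  intro k hk hkk₀
  set Γ : ℝ := ∑ j, γ j with hΓdef
  have hΓpos : 0 < Γ := Finset.sum_pos (fun i _ => (hγ i).1) hne
  have hΓle : Γ ≤ n := by
    calc Γ ≤ ∑ _j : Fin n, (1:ℝ) := Finset.sum_le_sum fun i _ => (hγ i).2.le
    _ = n := by simp
  set sc : ℝ := ∑ j, c j with hscdef
  have hscbound : |sc| ≤ n * C := by
    calc |sc| ≤ ∑ j, |c j| := Finset.abs_sum_le_sum_abs _ _
    _ ≤ ∑ _j : Fin n, C := Finset.sum_le_sum fun i _ => hcbound i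
    _ = n * C := by simp [mul_comm]
  have hk2 : k * (2 * n * C) < ε * L := (lt_div_iff₀ (by positivity)).mp hkk₀
  have hkC : k * (n * C) < L / 2 := by
    nlinarith [mul_le_mul_of_nonneg_right hε1 hLpos.le]
  set D : ℝ := L + k * sc with hDdef
  have hDge : L / 2 ≤ D := by
    have h1 : -(n * C) ≤ sc := (abs_le.mp hscbound).1
    nlinarith [mul_le_mul_of_nonneg_left h1 hk.le]
  have hDpos : 0 < D := by linarith
  set S₀ : ℝ := Γ * L / D with hS0def
  have hS0D : S₀ * D = Γ * L := div_mul_cancel₀ _ hDpos.ne'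
  have hS0D' : S₀ * (L + k * sc) = Γ * L := by rw [← hDdef]; exact hS0D
  have hS0nonneg : 0 ≤ S₀ := by positivity
  have hS0le : S₀ ≤ 2 * n := by nlinarith
  -- any solution has the closed form
  have hsol : ∀ Y : Fin n → ℝ,
      (∀ i, k * (-(γ i) * C + lam₁) * (∑ j, Y j) + L * Y i = γ i * L) →
      ∀ i, Y i = γ i - k * c i * S₀ / L := by
    intro Y hY
    set SY : ℝ := ∑ j, Y j with hSYdef
    have hsum : k * sc * SY + L * SY = Γ * L := by
      have h : ∑ i, (k * (-(γ i) * C + lam₁) * SY + L * Y i) = ∑ i, γ i * L :=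
        Finset.sum_congr rfl fun i _ => hY i
      have e1 : ∑ i, (k * (-(γ i) * C + lam₁) * SY + L * Y i)
          = (∑ i, k * (-(γ i) * C + lam₁)) * SY + L * ∑ i, Y i := by
        rw [Finset.sum_add_distrib, Finset.sum_mul, Finset.mul_sum]
      have e2 : (∑ i, k * (-(γ i) * C + lam₁)) = k * sc := by
        rw [hscdef, Finset.mul_sum]
      have e3 : ∑ i, γ i * L = Γ * L := by rw [hΓdef, Finset.sum_mul]
      rw [e1, e2, e3, ← hSYdef] at h
      linarith
    have hSY : SY = S₀ := by
      have h2 : SY * D = S₀ * D := by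
        rw [hS0D, hDdef]; ring_nf; ring_nf at hsum; linarith
      exact mul_right_cancel₀ hDpos.ne' h2
    intro i
    have h := hY i
    rw [hSY, ← hco i] at h
    field_simp
    linarith
  have hbound : ∀ i, |k * c i * S₀ / L| < ε := by
    intro i
    have habs : |k * c i * S₀ / L| = k * |c i| * S₀ / L := by
      rw [abs_div, abs_mul, abs_mul, abs_of_pos hk, abs_of_nonneg hS0nonneg,
        abs_of_pos hLpos]
    rw [habs, div_lt_iff₀ hLpos]
    have h4 : k * |c i| ≤ k * C := mul_le_mul_of_nonneg_left (hcbound i) hk.le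
    have h3 : k * |c i| * S₀ ≤ k * C * (2 * n) :=
      mul_le_mul h4 hS0le hS0nonneg (by positivity)
    nlinarith
  refine ⟨⟨fun i => γ i - k * c i * S₀ / L, ?_, ?_⟩, ?_⟩
  · -- it is a solution
    intro i
    have hsumX : (∑ j, (γ j - k * c j * S₀ / L)) = S₀ := by
      rw [Finset.sum_sub_distrib, ← hΓdef]
      have e : (∑ j, k * c j * S₀ / L) = k * sc * S₀ / L := by
        rw [hscdef, Finset.mul_sum, Finset.sum_mul, Finset.sum_div]
      rw [e]
      field_simp
      nlinarith [hS0D']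
    rw [hsumX, ← hco i]
    field_simp
    ring
  · -- uniqueness
    intro Y hY
    funext i
    exact hsol Y hY i
  · -- bounds
    intro Y hY i
    have hYi : Y i = γ i - k * c i * S₀ / L := hsol Y hY i
    have hb := abs_lt.mp (hbound i)
    have he := le_min_iff.mp (hεle i)
    constructor <;> rw [hYi]
    · linarith [hb.2, he.1]
    · linarith [hb.1, he.2]
end
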